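/- Let p be a prime. The disjoint union of p-1 cliques, each of order p-1, has no induced regular subgraph of order exactly p. Consequently N_=(p) ≥ (p-1)² + 1. -/

import Mathlib

/-- The induced subgraph of `G` on `s` is regular: all vertices of `s` have the same
number of neighbours within `s`. -/
def RegOn {V : Type*} (G : SimpleGraph V) (s : Set V) : Prop :=
  ∃ d : ℕ, ∀ v ∈ s, (s ∩ {w | G.Adj v w}).ncard = d

/-- `G` has a regular induced subgraph of order exactly `k`. -/
def HasRegEq {V : Type*} (G : SimpleGraph V) (k : ℕ) : Prop :=
  ∃ s : Set V, s.ncard = k ∧ RegOn G s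

/-- `G` has a regular induced subgraph of order at least `k`. -/
def HasRegGe {V : Type*} (G : SimpleGraph V) (k : ℕ) : Prop :=
  ∃ s : Set V, k ≤ s.ncard ∧ RegOn G s

/-- The least `n` such that every graph on `n` vertices has a regular induced subgraph
of order exactly `k`. -/
noncomputable def Neq (k : ℕ) : ℕ :=
  sInf {n | ∀ G : SimpleGraph (Fin n), HasRegEq G k}

/-- The least `n` such that every graph on `n` vertices has a regular induced subgraph
of order at least `k`. -/
noncomputable def Nge (k : ℕ) : ℕ :=
  sInf {n | ∀ G : SimpleGraph (Fin n), HasRegGe G k}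

open Finset in
/-- A crude Ramsey bound: any finite set of size at least `2^(a+b)` contains a clique
of size `a` or an independent set of size `b`. -/
lemma ramsey_aux {V : Type*} [DecidableEq V] (G : SimpleGraph V) :
    ∀ (n a b : ℕ) (S : Finset V), a + b = n → 2 ^ (a + b) ≤ S.card →
      (∃ T ⊆ S, T.card = a ∧ G.IsClique ↑T) ∨ (∃ T ⊆ S, T.card = b ∧ Gᶜ.IsClique ↑T) := by
  classical
  intro n
  induction n with
  | zero =>
    intro a b S hab _
    left
    exact ⟨∅, empty_subset _, by rw [card_empty]; omega, by simp⟩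
  | succ n ih =>
    intro a b S hab hcard
    rcases Nat.eq_zero_or_pos a with rfl | ha
    · exact Or.inl ⟨∅, empty_subset _, rfl, by simp⟩
    rcases Nat.eq_zero_or_pos b with rfl | hb
    · exact Or.inr ⟨∅, empty_subset _, rfl, by simp⟩
    obtain ⟨a', rfl⟩ : ∃ a', a = a' + 1 := ⟨a - 1, by omega⟩
    obtain ⟨b', rfl⟩ : ∃ b', b = b' + 1 := ⟨b - 1, by omega⟩
    obtain ⟨v, hv⟩ : S.Nonempty := card_pos.mp (lt_of_lt_of_le (Nat.pow_pos (by norm_num)) hcard)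
    set N := (S.erase v).filter (fun w => G.Adj v w) with hN
    set M := (S.erase v).filter (fun w => ¬ G.Adj v w) with hM
    have hNM : N.card + M.card = (S.erase v).card := card_filter_add_card_filter_not _
    have herase : (S.erase v).card = S.card - 1 := card_erase_of_mem hv
    have hpow : 2 ^ (a' + 1 + (b' + 1)) = 2 ^ (a' + b' + 1) + 2 ^ (a' + b' + 1) := by
      rw [show a' + 1 + (b' + 1) = (a' + b' + 1) + 1 from by omega, pow_succ]
      ring
    have key : 2 ^ (a' + b' + 1) ≤ N.card ∨ 2 ^ (a' + b' + 1) ≤ M.card := by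
      by_contra h
      push_neg at h
      omega
    rcases key with hkey | hkey
    · rcases ih a' (b' + 1) N (by omega) (by rw [show a' + (b' + 1) = a' + b' + 1 from by omega]; exact hkey) with ⟨T, hTN, hTc, hTcl⟩ | ⟨T, hTN, hTc, hTcl⟩
      · left
        have hvT : v ∉ T := fun h => (notMem_erase v S) ((filter_subset _ _) (hTN h))
        refine ⟨insert v T, ?_, ?_, ?_⟩
        · exact insert_subset hv (hTN.trans ((filter_subset _ _).trans (erase_subset _ _)))
        · rw [card_insert_of_notMem hvT, hTc]
        · rw [coe_insert]
          refine hTcl.insert (fun w hw _ => ?_)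
          exact (mem_filter.mp (hTN hw)).2
      · exact Or.inr ⟨T, hTN.trans ((filter_subset _ _).trans (erase_subset _ _)), hTc, hTcl⟩
    · rcases ih (a' + 1) b' M (by omega) (by rw [show a' + 1 + b' = a' + b' + 1 from by omega]; exact hkey) with ⟨T, hTN, hTc, hTcl⟩ | ⟨T, hTN, hTc, hTcl⟩
      · exact Or.inl ⟨T, hTN.trans ((filter_subset _ _).trans (erase_subset _ _)), hTc, hTcl⟩
      · right
        have hvT : v ∉ T := fun h => (notMem_erase v S) ((filter_subset _ _) (hTN h))
        refine ⟨insert v T, ?_, ?_, ?_⟩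
        · exact insert_subset hv (hTN.trans ((filter_subset _ _).trans (erase_subset _ _)))
        · rw [card_insert_of_notMem hvT, hTc]
        · rw [coe_insert]
          refine hTcl.insert (fun w hw hne => ?_)
          exact (G.compl_adj v w).mpr ⟨hne, (mem_filter.mp (hTN hw)).2⟩

open Finset in
lemma no_reg (p : ℕ) (hp : p.Prime) :
    ¬ HasRegEq (SimpleGraph.fromRel
        (fun (a b : Fin (p-1) × Fin (p-1)) => a.1 = b.1)) p := by
  classical
  set G := SimpleGraph.fromRel (fun (a b : Fin (p-1) × Fin (p-1)) => a.1 = b.1) with hG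
  rintro ⟨s, hcard, d, hreg⟩
  have hadj : ∀ a b : Fin (p-1) × Fin (p-1), G.Adj a b ↔ a ≠ b ∧ a.1 = b.1 := by
    intro a b
    rw [hG, SimpleGraph.fromRel_adj]
    constructor
    · rintro ⟨h1, h2 | h2⟩
      · exact ⟨h1, h2⟩
      · exact ⟨h1, h2.symm⟩
    · rintro ⟨h1, h2⟩; exact ⟨h1, Or.inl h2⟩
  have hfin : s.Finite := Set.toFinite s
  set S := hfin.toFinset with hS
  have hScard : S.card = p := by rw [hS, ← Set.ncard_eq_toFinset_card]; exact hcard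
  -- each fiber meeting S has exactly d+1 elements
  have hfiber : ∀ v ∈ S, (S.filter (fun w => w.1 = v.1)).card = d + 1 := by
    intro v hv
    have hvs : v ∈ s := hfin.mem_toFinset.mp hv
    have h1 : s ∩ {w | G.Adj v w} = ↑(S.filter (fun w => w.1 = v.1)) \ {v} := by
      ext w
      simp only [Set.mem_inter_iff, Set.mem_setOf_eq, hadj, Set.mem_diff, coe_filter,
        Set.mem_singleton_iff, hS, Set.Finite.mem_toFinset, Set.mem_setOf_eq]
      constructor
      · rintro ⟨hw, hne, heq⟩; exact ⟨⟨hw, heq.symm⟩, fun h => hne h.symm⟩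
      · rintro ⟨⟨hw, heq⟩, hne⟩; exact ⟨hw, fun h => hne h.symm, heq.symm⟩
    have h2 := hreg v hvs
    rw [h1] at h2
    have hvmem : v ∈ (↑(S.filter (fun w => w.1 = v.1)) : Set _) := by
      simp [hv]
    rw [Set.ncard_diff_singleton_of_mem hvmem] at h2
    have h3 := Set.ncard_coe_finset (S.filter (fun w => w.1 = v.1))
    have h4 : v ∈ S.filter (fun w => w.1 = v.1) := mem_filter.mpr ⟨hv, rfl⟩
    have h5 : 0 < (S.filter (fun w => w.1 = v.1)).card := card_pos.mpr ⟨v, h4⟩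
    omega
  -- counting
  have hsum : S.card = ∑ i ∈ S.image Prod.fst, (S.filter (fun w => w.1 = i)).card :=
    card_eq_sum_card_fiberwise (fun x hx => mem_image_of_mem _ hx)
  have hconst : ∀ i ∈ S.image Prod.fst, (S.filter (fun w => w.1 = i)).card = d + 1 := by
    intro i hi
    obtain ⟨v, hv, rfl⟩ := mem_image.mp hi
    exact hfiber v hv
  have hp2 : p = (S.image Prod.fst).card * (d + 1) := by
    calc p = S.card := hScard.symm
    _ = ∑ i ∈ S.image Prod.fst, (S.filter (fun w => w.1 = i)).card := hsum
    _ = ∑ _i ∈ S.image Prod.fst, (d + 1) := sum_congr rfl hconst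
    _ = (S.image Prod.fst).card * (d + 1) := by rw [sum_const, smul_eq_mul]
  have himg : (S.image Prod.fst).card ≤ p - 1 := by
    calc (S.image Prod.fst).card ≤ Fintype.card (Fin (p-1)) := card_le_univ _
    _ = p - 1 := Fintype.card_fin _
  have hSne : S.Nonempty := card_pos.mp (by rw [hScard]; exact hp.pos)
  obtain ⟨v, hv⟩ := hSne
  have hfibsize : d + 1 ≤ p - 1 := by
    rw [← hfiber v hv]
    calc (S.filter (fun w => w.1 = v.1)).card
        ≤ (univ : Finset (Fin (p-1))).card := by
          apply card_le_card_of_injOn Prod.snd (fun _ _ => mem_univ _)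
          intro a ha b hb hab
          have ha' := (mem_filter.mp ha).2
          have hb' := (mem_filter.mp hb).2
          exact Prod.ext (ha'.trans hb'.symm) hab
    _ = p - 1 := by rw [card_univ, Fintype.card_fin]
  have hdvd : d + 1 = 1 ∨ d + 1 = p :=
    hp.eq_one_or_self_of_dvd (d + 1) ⟨(S.image Prod.fst).card, hp2.trans (Nat.mul_comm _ _)⟩
  have hple := hp.two_le
  rcases hdvd with h | h
  · rw [h, mul_one] at hp2; omega
  · omega

open Finset in
lemma big_has_reg (p : ℕ) (G : SimpleGraph (Fin (2^(p+p)))) : HasRegEq G p := by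
  classical
  have hcard : 2^(p+p) ≤ (univ : Finset (Fin (2^(p+p)))).card := by
    rw [card_univ, Fintype.card_fin]
  rcases ramsey_aux G (p+p) p p univ rfl hcard with ⟨T, _, hTc, hTcl⟩ | ⟨T, _, hTc, hTcl⟩
  · refine ⟨↑T, by rw [Set.ncard_coe_finset, hTc], p - 1, ?_⟩
    intro v hv
    have h1 : (↑T : Set _) ∩ {w | G.Adj v w} = ↑(T.erase v) := by
      ext w
      simp only [Set.mem_inter_iff, Finset.mem_coe, Set.mem_setOf_eq, mem_erase]
      constructor
      · rintro ⟨hw, hadj⟩; exact ⟨hadj.ne', hw⟩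
      · rintro ⟨hne, hw⟩
        exact ⟨hw, hTcl hv (Finset.mem_coe.mpr hw) (fun h => hne h.symm)⟩
    rw [h1, Set.ncard_coe_finset, card_erase_of_mem (Finset.mem_coe.mp hv), hTc]
  · refine ⟨↑T, by rw [Set.ncard_coe_finset, hTc], 0, ?_⟩
    intro v hv
    have h1 : (↑T : Set _) ∩ {w | G.Adj v w} = ∅ := by
      ext w
      simp only [Set.mem_inter_iff, Finset.mem_coe, Set.mem_setOf_eq,
        Set.mem_empty_iff_false, iff_false, not_and]
      intro hw hadj
      exact ((G.compl_adj v w).mp (hTcl hv (Finset.mem_coe.mpr hw) hadj.ne)).2 hadj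
    rw [h1, Set.ncard_empty]

theorem cliques_no_reg_prime (p : ℕ) (hp : p.Prime) :
    (¬ HasRegEq (SimpleGraph.fromRel
        (fun (a b : Fin (p-1) × Fin (p-1)) => a.1 = b.1)) p) ∧
    (p - 1)^2 + 1 ≤ Neq p := by
  classical
  refine ⟨no_reg p hp, ?_⟩
  have hne : {n | ∀ G : SimpleGraph (Fin n), HasRegEq G p}.Nonempty :=
    ⟨2^(p+p), fun G => big_has_reg p G⟩
  refine le_csInf hne ?_
  intro n hn
  by_contra hlt
  push_neg at hlt
  have hn2 : n ≤ (p-1)*(p-1) := by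
    have := Nat.lt_succ_iff.mp hlt
    rwa [pow_two] at this
  obtain ⟨f⟩ : Nonempty (Fin n ↪ Fin (p-1) × Fin (p-1)) := by
    apply Function.Embedding.nonempty_of_card_le
    simpa [Fintype.card_prod] using hn2
  set H := SimpleGraph.fromRel (fun (a b : Fin (p-1) × Fin (p-1)) => a.1 = b.1) with hH
  obtain ⟨s, hs, d, hreg⟩ := hn (SimpleGraph.comap (⇑f) H)
  apply no_reg p hp
  refine ⟨f '' s, ?_, d, ?_⟩
  · rw [Set.ncard_image_of_injective _ f.injective, hs]
  · rintro w ⟨v, hv, rfl⟩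
    have h1 : ⇑f '' s ∩ {w | H.Adj (f v) w}
        = ⇑f '' (s ∩ {u | (SimpleGraph.comap (⇑f) H).Adj v u}) := by
      ext w
      simp only [Set.mem_inter_iff, Set.mem_image, Set.mem_setOf_eq, SimpleGraph.comap_adj]
      constructor
      · rintro ⟨⟨u, hu, rfl⟩, hadj⟩; exact ⟨u, ⟨hu, hadj⟩, rfl⟩
      · rintro ⟨u, ⟨hu, hadj⟩, rfl⟩; exact ⟨⟨u, hu, rfl⟩, hadj⟩
    rw [h1, Set.ncard_image_of_injective _ f.injective]
    exact hreg v hv
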